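/- Let a₊, a₋ ∈ (0,2)\{1}, let C₊, C₋, λ₊, λ₋, μ₊, μ₋ > 0 and T > 0. Define r : ℝ → ℝ by r(x) = exp(−(λ₊−μ₊)x²/2) for x > 0 and r(x) = exp(−(λ₋−μ₋)x²/2) for x < 0, and let ℓ̃ be the RDTS Lévy density with parameters (a₊, a₋, C₊, C₋, μ₊, μ₋). Then T·∫_ℝ (r(x) − log r(x) − 1)·ℓ̃(x) dx = 2^{−1−a₊/2}·T·C₊·Γ(−a₊/2)·( (a₊/2 − 1)·μ₊^{a₊/2} − (a₊/2)·λ₊·μ₊^{a₊/2−1} + λ₊^{a₊/2} ) + 2^{−1−a₋/2}·T·C₋·Γ(−a₋/2)·( (a₋/2 − 1)·μ₋^{a₋/2} − (a₋/2)·λ₋·μ₋^{a₋/2−1} + λ₋^{a₋/2} ). -/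

import Mathlib

open MeasureTheory Real Set
open Filter Topology

/-- The RDTS (rapidly-decreasing tempered stable) Lévy density with parameters
`(a₊, a₋, C₊, C₋, θ₊, θ₋)`. -/
noncomputable def rdtsDensity (ap am Cp Cm tp tm : ℝ) (x : ℝ) : ℝ :=
  if 0 < x then Cp * exp (-(tp * x ^ 2 / 2)) * x ^ (-ap - 1)
  else if x < 0 then Cm * exp (-(tm * x ^ 2 / 2)) * |x| ^ (-am - 1)
  else 0

/-- The 1-divergence (dual Kullback–Leibler divergence) between two
equivalent-martingale RDTS processes. -/
lemma rdts_meas_CS (a θ : ℝ) :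
    Measurable (fun x : ℝ => (exp (-(θ * x ^ 2 / 2)) - 1) * x ^ (-a - 1)) :=
  ((((measurable_id.pow_const 2).const_mul θ).div_const 2).neg.exp.sub measurable_const).mul
    (measurable_id.pow measurable_const)

lemma rdts_int_CS {a θ : ℝ} (ha : a ∈ Ioo (0:ℝ) 2) (hθ : 0 < θ) :
    IntegrableOn (fun x : ℝ => (exp (-(θ * x ^ 2 / 2)) - 1) * x ^ (-a - 1)) (Ioi 0) := by
  obtain ⟨ha0, ha2⟩ := ha
  rw [← Ioc_union_Ioi_eq_Ioi (zero_le_one (α := ℝ)), integrableOn_union]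
  constructor
  · have hmaj : IntegrableOn (fun x : ℝ => θ / 2 * x ^ (1 - a)) (Ioc (0:ℝ) 1) := by
      refine Integrable.const_mul ?_ _
      exact (intervalIntegrable_iff_integrableOn_Ioc_of_le zero_le_one).mp
        (intervalIntegral.intervalIntegrable_rpow' (by linarith))
    refine Integrable.mono' hmaj (rdts_meas_CS a θ).aestronglyMeasurable ?_
    filter_upwards [ae_restrict_mem measurableSet_Ioc] with x hx
    have hx0 : 0 < x := hx.1
    have hE : exp (-(θ * x ^ 2 / 2)) ≤ 1 := exp_le_one_iff.mpr (by nlinarith [sq_nonneg x])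
    have h1 : 1 - exp (-(θ * x ^ 2 / 2)) ≤ θ * x ^ 2 / 2 := by
      nlinarith [add_one_le_exp (-(θ * x ^ 2 / 2))]
    rw [Real.norm_eq_abs, abs_mul, abs_of_nonpos (by linarith), abs_of_nonneg (rpow_nonneg hx0.le _)]
    have hxp : x ^ (1 - a) = x ^ 2 * x ^ (-a - 1) := by
      rw [← rpow_two, ← rpow_add hx0]; congr 1; ring
    rw [hxp]
    have := rpow_nonneg hx0.le (-a - 1)
    nlinarith
  · have hmaj : IntegrableOn (fun x : ℝ => x ^ (-a - 1)) (Ioi (1:ℝ)) :=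
      integrableOn_Ioi_rpow_of_lt (by linarith) one_pos
    refine Integrable.mono' hmaj (rdts_meas_CS a θ).aestronglyMeasurable ?_
    filter_upwards [ae_restrict_mem measurableSet_Ioi] with x hx
    have hx0 : (0:ℝ) < x := lt_trans one_pos hx
    have hE0 : 0 < exp (-(θ * x ^ 2 / 2)) := exp_pos _
    have hE : exp (-(θ * x ^ 2 / 2)) ≤ 1 := exp_le_one_iff.mpr (by nlinarith [sq_nonneg x])
    rw [Real.norm_eq_abs, abs_mul, abs_of_nonpos (by linarith), abs_of_nonneg (rpow_nonneg hx0.le _)]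
    have := rpow_nonneg hx0.le (-a - 1)
    nlinarith

lemma rdts_int_G {a θ : ℝ} (ha : a ∈ Ioo (0:ℝ) 2) (hθ : 0 < θ) :
    IntegrableOn (fun x : ℝ => x ^ (1 - a) * exp (-(θ * x ^ 2 / 2))) (Ioi 0) := by
  refine (integrableOn_rpow_mul_exp_neg_mul_sq (by linarith : (0:ℝ) < θ / 2)
    (by linarith [ha.2] : (-1:ℝ) < 1 - a)).congr_fun (fun x _ => ?_) measurableSet_Ioi
  dsimp only
  rw [show -(θ / 2) * x ^ 2 = -(θ * x ^ 2 / 2) by ring]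

lemma rdts_integral_G {a θ : ℝ} (ha : a ∈ Ioo (0:ℝ) 2) (hθ : 0 < θ) :
    ∫ x in Ioi (0:ℝ), x ^ (1 - a) * exp (-(θ * x ^ 2 / 2))
      = (θ / 2) ^ (a / 2 - 1) * Gamma (1 - a / 2) / 2 := by
  have h := integral_rpow_mul_exp_neg_mul_rpow (p := 2) (q := 1 - a) (b := θ / 2)
    two_pos (by linarith [ha.2]) (by linarith)
  rw [show ∫ x in Ioi (0:ℝ), x ^ (1 - a) * exp (-(θ * x ^ 2 / 2))
      = ∫ x in Ioi (0:ℝ), x ^ (1 - a) * exp (-(θ / 2) * x ^ (2:ℝ)) from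
    setIntegral_congr_fun measurableSet_Ioi (fun x _ => by rw [rpow_two]; ring_nf), h]
  rw [show -(1 - a + 1) / 2 = a / 2 - 1 by ring, show (1 - a + 1) / 2 = 1 - a / 2 by ring]
  ring

lemma rdts_integral_CS {a θ : ℝ} (ha : a ∈ Ioo (0:ℝ) 2) (hθ : 0 < θ) :
    ∫ x in Ioi (0:ℝ), (exp (-(θ * x ^ 2 / 2)) - 1) * x ^ (-a - 1)
      = 2 ^ (-1 - a / 2) * θ ^ (a / 2) * Gamma (-(a / 2)) := by
  obtain ⟨ha0, ha2⟩ := ha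
  set Φ : ℝ → ℝ := fun x => (exp (-(θ * x ^ 2 / 2)) - 1) * x ^ (-a) / (-a) with hΦdef
  have hΦ0 : Φ 0 = 0 := by simp [hΦdef]
  have hderiv : ∀ x ∈ Ioi (0:ℝ), HasDerivAt Φ
      ((exp (-(θ * x ^ 2 / 2)) - 1) * x ^ (-a - 1)
        + θ / a * (x ^ (1 - a) * exp (-(θ * x ^ 2 / 2)))) x := by
    intro x hx
    have hx0 : (0:ℝ) < x := hx
    have h1 : HasDerivAt (fun y : ℝ => -(θ * y ^ 2 / 2)) (-(θ * x)) x := by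
      have := (((hasDerivAt_pow 2 x).const_mul θ).div_const 2).neg
      refine this.congr_deriv ?_
      simp; ring
    have h3 : HasDerivAt (fun y : ℝ => exp (-(θ * y ^ 2 / 2)) - 1)
        (exp (-(θ * x ^ 2 / 2)) * (-(θ * x))) x := (h1.exp).sub_const 1
    have h4 : HasDerivAt (fun y : ℝ => y ^ (-a)) (-a * x ^ (-a - 1)) x :=
      Real.hasDerivAt_rpow_const (Or.inl (ne_of_gt hx0))
    have h5 := (h3.mul h4).div_const (-a)
    refine HasDerivAt.congr_deriv h5 ?_
    have hxa : x ^ (1 - a) = x * x ^ (-a) := by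
      rw [show (1:ℝ) - a = 1 + (-a) by ring, rpow_add hx0, rpow_one]
    have hxb : x ^ (-a - 1) = x ^ (-a) / x := by
      rw [show -a - 1 = -a + (-1) by ring, rpow_add hx0, rpow_neg_one, div_eq_mul_inv]
    rw [hxa, hxb]
    field_simp
    ring
  have hint : IntegrableOn (fun x : ℝ => (exp (-(θ * x ^ 2 / 2)) - 1) * x ^ (-a - 1)
      + θ / a * (x ^ (1 - a) * exp (-(θ * x ^ 2 / 2)))) (Ioi 0) :=
    (rdts_int_CS ⟨ha0, ha2⟩ hθ).add ((rdts_int_G ⟨ha0, ha2⟩ hθ).const_mul _)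
  have hcont : ContinuousWithinAt Φ (Ici 0) 0 := by
    rw [ContinuousWithinAt, hΦ0]
    have hbnd : Tendsto (fun x : ℝ => θ / (2 * a) * x ^ (2 - a)) (𝓝[Ici 0] 0) (𝓝 0) := by
      have h1 : Tendsto (fun x : ℝ => θ / (2 * a) * x ^ (2 - a)) (𝓝 0) (𝓝 (θ / (2 * a) * (0:ℝ) ^ (2 - a))) :=
        ((Real.continuousAt_rpow_const 0 (2 - a) (Or.inr (by linarith))).tendsto).const_mul _
      rw [Real.zero_rpow (by linarith : (2:ℝ) - a ≠ 0), mul_zero] at h1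
      exact h1.mono_left nhdsWithin_le_nhds
    refine squeeze_zero_norm' ?_ hbnd
    · filter_upwards [self_mem_nhdsWithin] with x (hx : x ∈ Ici (0:ℝ))
      rcases eq_or_lt_of_le (mem_Ici.mp hx) with h | hx0
      · rw [← h, hΦ0, norm_zero, Real.zero_rpow (show (2:ℝ) - a ≠ 0 by linarith), mul_zero]
      · have hE : exp (-(θ * x ^ 2 / 2)) ≤ 1 := exp_le_one_iff.mpr (by nlinarith [sq_nonneg x])
        have h1 : 1 - exp (-(θ * x ^ 2 / 2)) ≤ θ * x ^ 2 / 2 := by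
          nlinarith [add_one_le_exp (-(θ * x ^ 2 / 2))]
        have hxp : x ^ (2 - a) = x ^ 2 * x ^ (-a) := by
          rw [show (2:ℝ) - a = 2 + (-a) by ring, rpow_add hx0, rpow_two]
        show |(exp (-(θ * x ^ 2 / 2)) - 1) * x ^ (-a) / (-a)| ≤ θ / (2 * a) * x ^ (2 - a)
        rw [abs_div, abs_mul, abs_of_nonpos (by linarith : exp (-(θ * x ^ 2 / 2)) - 1 ≤ 0),
          abs_of_nonneg (rpow_nonneg hx0.le (-a)), abs_neg, abs_of_pos (by linarith : (0:ℝ) < a),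
          hxp, div_le_iff₀ (by linarith : (0:ℝ) < a)]
        have h2 := mul_le_mul_of_nonneg_right h1 (rpow_nonneg hx0.le (-a))
        have h3 : θ / (2 * a) * (x ^ 2 * x ^ (-a)) * a = θ * x ^ 2 / 2 * x ^ (-a) := by
          field_simp
        linarith
  have htop : Tendsto Φ atTop (𝓝 0) := by
    have hE : Tendsto (fun x : ℝ => exp (-(θ * x ^ 2 / 2))) atTop (𝓝 0) := by
      apply Real.tendsto_exp_atBot.comp
      have h2 : Tendsto (fun x : ℝ => θ * x ^ 2 / 2) atTop atTop :=
        ((tendsto_pow_atTop two_ne_zero).const_mul_atTop hθ).atTop_div_const two_pos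
      exact tendsto_neg_atTop_atBot.comp h2
    have h := ((hE.sub_const 1).mul (tendsto_rpow_neg_atTop ha0)).div_const (-a)
    simpa using h
  have h0 := integral_Ioi_of_hasDerivAt_of_tendsto hcont hderiv hint htop
  rw [hΦ0, sub_zero] at h0
  rw [integral_add (rdts_int_CS ⟨ha0, ha2⟩ hθ) ((rdts_int_G ⟨ha0, ha2⟩ hθ).const_mul _),
    integral_const_mul, rdts_integral_G ⟨ha0, ha2⟩ hθ] at h0
  have hkey : ∫ x in Ioi (0:ℝ), (exp (-(θ * x ^ 2 / 2)) - 1) * x ^ (-a - 1)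
      = -(θ / a * ((θ / 2) ^ (a / 2 - 1) * Gamma (1 - a / 2) / 2)) := by linarith
  rw [hkey, show (1:ℝ) - a / 2 = -(a / 2) + 1 by ring,
    Gamma_add_one (by intro h; rw [neg_eq_zero] at h; linarith)]
  have hP : (θ / 2 : ℝ) ^ (a / 2) = (θ / 2) ^ (a / 2 - 1) * (θ / 2) := by
    rw [← rpow_add_one (by positivity : (θ/2:ℝ) ≠ 0)]; congr 1; ring
  have hQ : (θ / 2 : ℝ) ^ (a / 2) = θ ^ (a / 2) / 2 ^ (a / 2) :=
    div_rpow hθ.le (by norm_num) _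
  have hR : (2:ℝ) ^ (-1 - a / 2) = 1 / (2 * 2 ^ (a / 2)) := by
    rw [show (-1 : ℝ) - a / 2 = -(1 + a/2) by ring, rpow_neg (by norm_num), rpow_add two_pos,
      rpow_one]
    ring
  have h2pos : (0:ℝ) < 2 ^ (a / 2) := rpow_pos_of_pos two_pos _
  have hS : (θ / 2 : ℝ) ^ (a / 2 - 1) = 2 * θ ^ (a / 2) / (θ * 2 ^ (a / 2)) := by
    rw [eq_div_iff (by positivity)]
    have h := hP.symm.trans hQ
    rw [eq_div_iff (ne_of_gt h2pos)] at h
    linear_combination 2 * h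
  rw [hS, hR]
  have ha' : a ≠ 0 := by linarith
  have hθ' : θ ≠ 0 := ne_of_gt hθ
  have h2' : (2:ℝ) ^ (a / 2) ≠ 0 := ne_of_gt h2pos
  field_simp

lemma rdts_eq_split {a C l m : ℝ} :
    ∀ x ∈ Ioi (0:ℝ),
      (exp (-((l - m) * x ^ 2 / 2)) + (l - m) * x ^ 2 / 2 - 1)
          * (C * exp (-(m * x ^ 2 / 2)) * x ^ (-a - 1))
        = C * ((exp (-(l * x ^ 2 / 2)) - 1) * x ^ (-a - 1))
            - C * ((exp (-(m * x ^ 2 / 2)) - 1) * x ^ (-a - 1))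
            + C * (l - m) / 2 * (x ^ (1 - a) * exp (-(m * x ^ 2 / 2))) := by
  intro x hx
  have hx0 : (0:ℝ) < x := hx
  have hexp : exp (-((l - m) * x ^ 2 / 2)) * exp (-(m * x ^ 2 / 2)) = exp (-(l * x ^ 2 / 2)) := by
    rw [← exp_add]; congr 1; ring
  have hxp : x ^ (1 - a) = x ^ 2 * x ^ (-a - 1) := by
    rw [show (1:ℝ) - a = 2 + (-a - 1) by ring, rpow_add hx0, rpow_two]
  rw [hxp, ← hexp]
  ring

lemma rdts_int_side {a C l m : ℝ} (ha : a ∈ Ioo (0:ℝ) 2) (hl : 0 < l) (hm : 0 < m) :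
    IntegrableOn (fun x : ℝ => (exp (-((l - m) * x ^ 2 / 2)) + (l - m) * x ^ 2 / 2 - 1)
      * (C * exp (-(m * x ^ 2 / 2)) * x ^ (-a - 1))) (Ioi 0) := by
  have h : IntegrableOn (fun x : ℝ => C * ((exp (-(l * x ^ 2 / 2)) - 1) * x ^ (-a - 1))
      - C * ((exp (-(m * x ^ 2 / 2)) - 1) * x ^ (-a - 1))
      + C * (l - m) / 2 * (x ^ (1 - a) * exp (-(m * x ^ 2 / 2)))) (Ioi 0) :=
    ((((rdts_int_CS ha hl).const_mul C).sub ((rdts_int_CS ha hm).const_mul C)).add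
      ((rdts_int_G ha hm).const_mul (C * (l - m) / 2)))
  exact h.congr_fun (fun x hx => (rdts_eq_split x hx).symm) measurableSet_Ioi

lemma rdts_side {a C l m : ℝ} (ha : a ∈ Ioo (0:ℝ) 2) (hC : 0 < C) (hl : 0 < l) (hm : 0 < m) :
    ∫ x in Ioi (0:ℝ), (exp (-((l - m) * x ^ 2 / 2)) + (l - m) * x ^ 2 / 2 - 1)
        * (C * exp (-(m * x ^ 2 / 2)) * x ^ (-a - 1))
      = 2 ^ (-1 - a / 2) * C * Gamma (-(a / 2)) *
          ((a / 2 - 1) * m ^ (a / 2) - a / 2 * l * m ^ (a / 2 - 1) + l ^ (a / 2)) := by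
  rw [setIntegral_congr_fun measurableSet_Ioi (fun x hx => rdts_eq_split x hx)]
  have hi1 : IntegrableOn (fun x : ℝ => C * ((exp (-(l * x ^ 2 / 2)) - 1) * x ^ (-a - 1))) (Ioi 0) :=
    (rdts_int_CS ha hl).const_mul C
  have hi2 : IntegrableOn (fun x : ℝ => C * ((exp (-(m * x ^ 2 / 2)) - 1) * x ^ (-a - 1))) (Ioi 0) :=
    (rdts_int_CS ha hm).const_mul C
  have hi3 : IntegrableOn (fun x : ℝ => C * (l - m) / 2 * (x ^ (1 - a) * exp (-(m * x ^ 2 / 2)))) (Ioi 0) :=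
    (rdts_int_G ha hm).const_mul _
  have hi12 : IntegrableOn (fun x : ℝ => C * ((exp (-(l * x ^ 2 / 2)) - 1) * x ^ (-a - 1))
      - C * ((exp (-(m * x ^ 2 / 2)) - 1) * x ^ (-a - 1))) (Ioi 0) := hi1.sub hi2
  rw [integral_add hi12 hi3, integral_sub hi1 hi2,
    integral_const_mul, integral_const_mul, integral_const_mul,
    rdts_integral_CS ha hl, rdts_integral_CS ha hm, rdts_integral_G ha hm]
  obtain ⟨ha0, ha2⟩ := ha
  -- rewrite Gamma (1 - a/2)
  rw [show (1:ℝ) - a / 2 = -(a / 2) + 1 by ring,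
    Gamma_add_one (by intro h; rw [neg_eq_zero] at h; linarith)]
  -- rpow algebra
  have h2pos : (0:ℝ) < 2 ^ (a / 2) := rpow_pos_of_pos two_pos _
  have hP : (m / 2 : ℝ) ^ (a / 2) = (m / 2) ^ (a / 2 - 1) * (m / 2) := by
    rw [← rpow_add_one (by positivity : (m/2:ℝ) ≠ 0)]; congr 1; ring
  have hQ : (m / 2 : ℝ) ^ (a / 2) = m ^ (a / 2) / 2 ^ (a / 2) :=
    div_rpow hm.le (by norm_num) _
  have hS : (m / 2 : ℝ) ^ (a / 2 - 1) = 2 * m ^ (a / 2) / (m * 2 ^ (a / 2)) := by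
    rw [eq_div_iff (by positivity)]
    have h := hP.symm.trans hQ
    rw [eq_div_iff (ne_of_gt h2pos)] at h
    linear_combination 2 * h
  have hM : m ^ (a / 2 : ℝ) = m ^ (a / 2 - 1) * m := by
    rw [← rpow_add_one (ne_of_gt hm)]; congr 1; ring
  have hR : (2:ℝ) ^ (-1 - a / 2) = 1 / (2 * 2 ^ (a / 2)) := by
    rw [show (-1 : ℝ) - a / 2 = -(1 + a/2) by ring, rpow_neg (by norm_num), rpow_add two_pos,
      rpow_one]
    ring
  rw [hS, hR, hM]
  have hm' : m ≠ 0 := ne_of_gt hm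
  have h2' : (2:ℝ) ^ (a / 2) ≠ 0 := ne_of_gt h2pos
  field_simp
  ring

theorem rdts_dual_kl_divergence (ap am Cp Cm lp lm mp mm T : ℝ)
    (hap : ap ∈ Ioo (0:ℝ) 2) (hap1 : ap ≠ 1)
    (ham : am ∈ Ioo (0:ℝ) 2) (ham1 : am ≠ 1)
    (hCp : 0 < Cp) (hCm : 0 < Cm) (hlp : 0 < lp) (hlm : 0 < lm)
    (hmp : 0 < mp) (hmm : 0 < mm) (hT : 0 < T)
    (r : ℝ → ℝ)
    (hrp : ∀ x : ℝ, 0 < x → r x = exp (-((lp - mp) * x ^ 2 / 2)))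
    (hrm : ∀ x : ℝ, x < 0 → r x = exp (-((lm - mm) * x ^ 2 / 2))) :
    T * ∫ x : ℝ, (r x - Real.log (r x) - 1) * rdtsDensity ap am Cp Cm mp mm x
      = (2:ℝ) ^ (-1 - ap / 2) * T * Cp * Gamma (-(ap / 2)) *
          ((ap / 2 - 1) * mp ^ (ap / 2) - (ap / 2) * lp * mp ^ (ap / 2 - 1) + lp ^ (ap / 2))
        + (2:ℝ) ^ (-1 - am / 2) * T * Cm * Gamma (-(am / 2)) *
          ((am / 2 - 1) * mm ^ (am / 2) - (am / 2) * lm * mm ^ (am / 2 - 1) + lm ^ (am / 2)) := by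
  set G : ℝ → ℝ := fun x =>
    if 0 < x then
      (exp (-((lp - mp) * x ^ 2 / 2)) + (lp - mp) * x ^ 2 / 2 - 1)
        * (Cp * exp (-(mp * x ^ 2 / 2)) * x ^ (-ap - 1))
    else if x < 0 then
      (exp (-((lm - mm) * x ^ 2 / 2)) + (lm - mm) * x ^ 2 / 2 - 1)
        * (Cm * exp (-(mm * x ^ 2 / 2)) * |x| ^ (-am - 1))
    else 0 with hG
  have hFG : (fun x => (r x - Real.log (r x) - 1) * rdtsDensity ap am Cp Cm mp mm x) = G := by
    funext x
    rcases lt_trichotomy x 0 with hx | hx | hx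
    · simp only [hG, rdtsDensity, if_neg (not_lt.mpr hx.le), if_pos hx, hrm x hx, log_exp]
      ring
    · subst hx
      simp [hG, rdtsDensity]
    · simp only [hG, rdtsDensity, if_pos hx, hrp x hx, log_exp]
      ring
  rw [hFG]
  have hIpos : IntegrableOn G (Ioi 0) :=
    (rdts_int_side hap hlp hmp).congr_fun (fun x hx => (if_pos hx).symm) measurableSet_Ioi
  have hpos : ∫ x in Ioi (0:ℝ), G x
      = 2 ^ (-1 - ap / 2) * Cp * Gamma (-(ap / 2)) *
          ((ap / 2 - 1) * mp ^ (ap / 2) - ap / 2 * lp * mp ^ (ap / 2 - 1) + lp ^ (ap / 2)) := by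
    refine (setIntegral_congr_fun measurableSet_Ioi (fun x hx => ?_)).trans
      (rdts_side hap hCp hlp hmp)
    exact if_pos (mem_Ioi.mp hx)
  have hGneg : ∀ x ∈ Ioi (0:ℝ), G (-x)
      = (exp (-((lm - mm) * x ^ 2 / 2)) + (lm - mm) * x ^ 2 / 2 - 1)
          * (Cm * exp (-(mm * x ^ 2 / 2)) * x ^ (-am - 1)) := by
    intro x hx
    have hx0 : (0:ℝ) < x := hx
    have h1 : ¬ (0 < -x) := by push_neg; linarith
    have h2 : -x < 0 := by linarith
    simp only [hG, if_neg h1, if_pos h2, neg_sq, abs_neg, abs_of_pos hx0]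
  have hIneg : IntegrableOn G (Iic 0) := by
    rw [integrableOn_Iic_iff_integrableOn_Iio,
      ← (Measure.measurePreserving_neg (volume : Measure ℝ)).integrableOn_comp_preimage
        (Homeomorph.neg ℝ).measurableEmbedding]
    simp only [Function.comp_def, neg_preimage, neg_Iio, neg_zero]
    exact (rdts_int_side ham hlm hmm).congr_fun (fun x hx => (hGneg x hx).symm) measurableSet_Ioi
  have hneg : ∫ x in Iic (0:ℝ), G x
      = 2 ^ (-1 - am / 2) * Cm * Gamma (-(am / 2)) *
          ((am / 2 - 1) * mm ^ (am / 2) - am / 2 * lm * mm ^ (am / 2 - 1) + lm ^ (am / 2)) := by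
    have h := integral_comp_neg_Ioi (0:ℝ) G
    rw [neg_zero] at h
    rw [← h, setIntegral_congr_fun measurableSet_Ioi hGneg]
    exact rdts_side ham hCm hlm hmm
  rw [← intervalIntegral.integral_Iic_add_Ioi hIneg hIpos, hneg, hpos]
  ring
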